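/- For n ≥ 1, let S_0(z) = ∑_{i=1}^n c_i (z^{2i−1} − z^{1−2i})/(2i−1) with c_i = (−1)^{i+1}(n−1)! n! / ((2i−1)(n−i)!(n+i−1)!), and b = 2^{4n−1}/(n·C(2n,n)²). Then z = 1 is a critical point of order 2n of the action S(z) = S_0(z) − b log z: that is, (z d/dz)^k [S_0(z) − b log z] vanishes at z = 1 for all 1 ≤ k ≤ 2n. -/

import Mathlib

open scoped BigOperators Nat

/-- The odd multicritical action `S₀(z) = ∑_{i=1}^n cᵢ (z^{2i-1} - z^{1-2i})/(2i-1)` with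
`cᵢ = (-1)^{i+1} (n-1)! n! / ((2i-1)(n-i)!(n+i-1)!)`. -/
noncomputable def S0 (n : ℕ) (z : ℝ) : ℝ :=
  ∑ i ∈ Finset.Icc 1 n,
    ((-1 : ℝ) ^ (i + 1) * ((n - 1).factorial : ℝ) * (n.factorial : ℝ) /
        (((2 * i - 1 : ℕ) : ℝ) * ((n - i).factorial : ℝ) * ((n + i - 1).factorial : ℝ))) *
      (z ^ (2 * i - 1) - z⁻¹ ^ (2 * i - 1)) / ((2 * i - 1 : ℕ) : ℝ)

/-- The endpoint constant `b = 2^{4n-1}/(n C(2n,n)²)`. -/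
noncomputable def bConst (n : ℕ) : ℝ :=
  2 ^ (4 * n - 1) / ((n : ℝ) * ((Nat.choose (2 * n) n : ℝ)) ^ 2)

open Finset fwdDiff

lemma polyKill : ∀ (p M : ℕ), p < M → ∀ (a b : ℝ),
    (Δ_[(1:ℕ)])^[M] (fun t : ℕ => (a + b * t) ^ p) = fun _ => 0 := by
  intro p
  induction p using Nat.strong_induction_on with
  | _ p IH =>
    intro M hpM a b
    obtain ⟨M, rfl⟩ : ∃ M', M = M' + 1 := ⟨M - 1, by omega⟩
    rw [Function.iterate_succ_apply]
    have h1 : fwdDiff (1:ℕ) (fun t : ℕ => (a + b * t) ^ p)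
        = fun t : ℕ => ∑ r ∈ range p, ((a + b * t) ^ r * b ^ (p - r) * (p.choose r : ℝ)) := by
      funext t
      have : (a + b * ((t:ℕ) + 1 : ℕ)) ^ p = ((a + b * t) + b) ^ p := by push_cast; ring_nf
      rw [fwdDiff, this, add_pow, sum_range_succ]
      simp
    rw [h1]
    have h2 : (fun t : ℕ => ∑ r ∈ range p, ((a + b * t) ^ r * b ^ (p - r) * (p.choose r : ℝ)))
        = ∑ r ∈ range p, (b ^ (p - r) * (p.choose r : ℝ)) • fun t : ℕ => (a + b * t) ^ r := by
      funext t; simp [Finset.sum_apply]; congr 1; funext r; ring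
    rw [h2, fwdDiff_iter_finset_sum]
    funext t
    rw [Finset.sum_apply]
    apply Finset.sum_eq_zero
    intro r hr
    rw [mem_range] at hr
    rw [fwdDiff_iter_const_smul, IH r (by omega) M (by omega) a b]
    simp

lemma altsum (f : ℕ → ℝ) (M : ℕ) (h : (Δ_[(1:ℕ)])^[M] f = fun _ => 0) :
    ∑ t ∈ range (M + 1), (-1 : ℝ) ^ (M - t) * (M.choose t : ℝ) * f t = 0 := by
  have h2 := fwdDiff_iter_eq_sum_shift (1 : ℕ) f M 0
  rw [h] at h2
  calc ∑ t ∈ range (M + 1), (-1 : ℝ) ^ (M - t) * (M.choose t : ℝ) * f t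
      = ∑ k ∈ range (M + 1), ((-1 : ℤ) ^ (M - k) * (M.choose k : ℤ)) • f (0 + k • (1:ℕ)) := by
        apply Finset.sum_congr rfl
        intro t _
        rw [zsmul_eq_mul]
        push_cast
        norm_num
    _ = 0 := h2.symm

lemma neg_one_pow_congrR (a b : ℕ) (h : a % 2 = b % 2) : (-1:ℝ)^a = (-1)^b := by
  rcases Nat.even_or_odd a with ha | ha
  · have hb : Even b := by rw [Nat.even_iff] at *; omega
    rw [ha.neg_one_pow, hb.neg_one_pow]
  · have hb : Odd b := by rw [Nat.odd_iff] at *; omega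
    rw [ha.neg_one_pow, hb.neg_one_pow]

lemma sum_Icc_eq_sum_range' (F : ℕ → ℝ) (n : ℕ) :
    ∑ i ∈ Icc 1 n, F i = ∑ t ∈ range n, F (n - t) := by
  refine Finset.sum_nbij' (fun i => n - i) (fun t => n - t) ?_ ?_ ?_ ?_ ?_ <;>
      intro a ha <;> simp only [mem_Icc, mem_range] at *
  · omega
  · omega
  · omega
  · omega
  · congr 1; omega

lemma lemA (n j : ℕ) (hj1 : 1 ≤ j) (hj2 : j ≤ n - 1) (hn : 1 ≤ n) :
    ∑ i ∈ Icc 1 n, (-1:ℝ)^(i+1) * ((2*n-1).choose (n-i) : ℝ) * ((2*i-1:ℕ):ℝ)^(2*j-1) = 0 := by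
  obtain ⟨M, hM⟩ : ∃ M, M = 2*n-1 := ⟨_, rfl⟩
  obtain ⟨p, hp⟩ : ∃ p, p = 2*j-1 := ⟨_, rfl⟩
  have hpodd : Odd p := ⟨j - 1, by omega⟩
  set g : ℕ → ℝ := fun t => ((2*n-1:ℝ) + (-2) * t)^p with hg
  set h : ℕ → ℝ := fun t => (-1:ℝ)^(M-t) * (M.choose t : ℝ) * g t with hh
  have hU : ∑ t ∈ range (M+1), h t = 0 := altsum g M (polyKill p M (by omega) _ _)
  have key : ∀ t < n, h (2*n - 1 - t) = h t := by
    intro t ht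
    have h2 : M - (2*n-1-t) = t := by omega
    have h3 : (M.choose (2*n-1-t) : ℝ) = (M.choose t : ℝ) := by
      have e : 2*n-1-t = M - t := by omega
      rw [e, Nat.choose_symm (by omega)]
    have h4 : g (2*n-1-t) = -g t := by
      rw [hg]
      simp only
      have hc : ((2*n-1-t : ℕ) : ℝ) = 2*(n:ℝ) - 1 - t := by
        rw [Nat.cast_sub (by omega : t ≤ 2*n-1), Nat.cast_sub (by omega : 1 ≤ 2*n)]
        push_cast; ring
      rw [hc, show (2*(n:ℝ)-1 + (-2)*(2*(n:ℝ)-1-t)) = -((2*n-1:ℝ) + (-2)*t) by ring,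
        hpodd.neg_pow]
    have h5 : (-1:ℝ)^t = -(-1:ℝ)^(M-t) := by
      rw [show -(-1:ℝ)^(M-t) = (-1:ℝ)^(M-t+1) by rw [pow_succ]; ring]
      exact neg_one_pow_congrR t (M-t+1) (by omega)
    rw [hh]
    simp only
    rw [h2, h3, h4, h5]
    ring
  have hhalf : ∑ t ∈ range n, h t = 0 := by
    have hsplit : ∑ t ∈ range (M+1), h t = (∑ t ∈ range n, h t) + ∑ t ∈ range n, h (n + t) := by
      rw [show M + 1 = n + n by omega, Finset.sum_range_add]
    have hrefl : ∑ t ∈ range n, h (n + t) = ∑ t ∈ range n, h t := by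
      rw [← Finset.sum_range_reflect (fun t => h (n + t)) n]
      apply Finset.sum_congr rfl
      intro t ht
      rw [mem_range] at ht
      rw [show n + (n - 1 - t) = 2*n - 1 - t by omega]
      exact key t ht
    rw [hsplit, hrefl] at hU
    linarith
  rw [sum_Icc_eq_sum_range']
  have hterm : ∀ t ∈ range n, (-1:ℝ)^((n-t)+1) * ((2*n-1).choose (n-(n-t)) : ℝ)
      * ((2*(n-t)-1:ℕ):ℝ)^(2*j-1) = (-1:ℝ)^n * h t := by
    intro t ht
    rw [mem_range] at ht
    have e1 : n - (n - t) = t := by omega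
    have e2 : ((2*(n-t)-1:ℕ):ℝ) = (2*n-1:ℝ) + (-2)*t := by
      rw [Nat.cast_sub (by omega : 1 ≤ 2*(n-t)), Nat.cast_mul, Nat.cast_sub (by omega : t ≤ n)]
      push_cast; ring
    have e3 : (-1:ℝ)^(n-t+1) = (-1:ℝ)^n * (-1:ℝ)^(M-t) := by
      rw [← pow_add]
      exact neg_one_pow_congrR _ _ (by omega)
    have e4 : (2*n-1).choose (n-(n-t)) = M.choose t := by rw [e1, hM]
    rw [e2, e3, e4, hh, hg, ← hp]
    simp only
    ring
  rw [Finset.sum_congr rfl hterm, ← Finset.mul_sum, hhalf, mul_zero]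


section RealIntegrals
open Real intervalIntegral


-- B3: Wallis
lemma wallis_odd (m : ℕ) :
    ∫ x in (0:ℝ)..(π/2), sin x ^ (2*m+1) = 4^m * (m.factorial : ℝ)^2 / ((2*m+1).factorial : ℝ) := by
  induction m with
  | zero => simp
  | succ m ih =>
    have h := integral_sin_pow (a := 0) (b := π/2) (2*m+1)
    rw [show 2*m+1+2 = 2*(m+1)+1 by ring] at h
    rw [h, ih]
    rw [Real.sin_zero, Real.cos_pi_div_two]
    have h1 : ((2*(m+1)+1).factorial : ℝ) = (2*m+3) * ((2*m+2) * ((2*m+1).factorial : ℝ)) := by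
      rw [show 2*(m+1)+1 = (2*m+2)+1 by ring, Nat.factorial_succ, Nat.factorial_succ]
      push_cast; ring
    have h2 : ((m+1).factorial : ℝ) = (m+1) * (m.factorial : ℝ) := by
      rw [Nat.factorial_succ]; push_cast; ring
    have h3 : ((2*m+1).factorial : ℝ) ≠ 0 := Nat.cast_ne_zero.mpr (Nat.factorial_ne_zero _)
    have h4 : (2*(m:ℝ)+3) ≠ 0 := by positivity
    have h5 : (2*(m:ℝ)+2) ≠ 0 := by positivity
    rw [h1, h2]
    field_simp
    push_cast
    ring

end RealIntegrals

section ComplexPart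
open Complex


lemma neg_one_pow_congrC (a b : ℕ) (h : a % 2 = b % 2) : (-1:ℂ)^a = (-1)^b := by
  rcases Nat.even_or_odd a with ha | ha
  · have hb : Even b := by rw [Nat.even_iff] at *; omega
    rw [ha.neg_one_pow, hb.neg_one_pow]
  · have hb : Odd b := by rw [Nat.odd_iff] at *; omega
    rw [ha.neg_one_pow, hb.neg_one_pow]

lemma exp_sub_exp (w : ℂ) : Complex.exp (w*I) - Complex.exp (-(w*I)) = 2*I*Complex.sin w := by
  rw [Complex.sin]
  field_simp
  ring_nf
  rw [I_sq]
  ring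

noncomputable def E (θ : ℝ) : ℤ → ℂ := fun a => Complex.exp (a * θ * I)

section B1
variable (θ : ℝ)

lemma E_mul (a b : ℤ) : E θ a * E θ b = E θ (a+b) := by
  simp only [E, ← Complex.exp_add]
  congr 1
  push_cast
  ring

lemma E_pow (a : ℤ) (k : ℕ) : (E θ a)^k = E θ (a*k) := by
  simp only [E, ← Complex.exp_nat_mul]
  congr 1
  push_cast
  ring

lemma E_sub_E (m : ℤ) : E θ m - E θ (-m) = 2*I*Complex.sin (m*θ) := by
  have h := exp_sub_exp ((m:ℂ)*θ)
  simp only [E]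
  rw [show ((-m : ℤ):ℂ) * θ * I = -(((m:ℂ)*θ)*I) by push_cast; ring,
    show ((m:ℤ):ℂ)*θ*I = ((m:ℂ)*θ)*I by ring]
  exact h

lemma step1 (n : ℕ) (hn : 1 ≤ n) :
    (E θ 1 - E θ (-1))^(2*n-1)
      = ∑ m ∈ range (2*n), (-1:ℂ)^(m+1) * ((2*n-1).choose m : ℂ) * E θ (2*m - (2*n-1)) := by
  rw [sub_pow, show 2*n-1+1 = 2*n by omega]
  apply Finset.sum_congr rfl
  intro m hm
  rw [mem_range] at hm
  rw [E_pow, E_pow, mul_assoc ((-1:ℂ)^(m+(2*n-1))), E_mul]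
  rw [show (1 * (m:ℤ) + -1 * ((2*n-1) - m : ℕ)) = 2*(m:ℤ) - (2*n-1) by
    push_cast [Nat.cast_sub (by omega : m ≤ 2*n-1), Nat.cast_sub (by omega : 1 ≤ 2*n)]
    ring]
  rw [neg_one_pow_congrC (m+(2*n-1)) (m+1) (by omega)]
  ring
end B1


lemma sinIdentC (θ : ℝ) (n : ℕ) (hn : 1 ≤ n) :
    ∑ m ∈ range n, (-1:ℂ)^m * ((2*n-1).choose m : ℂ) * Complex.sin (((2*n-1-2*m : ℕ):ℂ)*θ)
      = (-4:ℂ)^(n-1) * Complex.sin θ ^ (2*n-1) := by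
  set h : ℕ → ℂ := fun m => (-1:ℂ)^(m+1) * ((2*n-1).choose m : ℂ) * E θ (2*m - (2*n-1)) with hh
  have hsplit : ∑ m ∈ range (2*n), h m = (∑ m ∈ range n, h m) + ∑ m ∈ range n, h (n + m) := by
    rw [show 2*n = n + n by ring, Finset.sum_range_add]
  have hrefl : ∑ m ∈ range n, h (n + m) = ∑ m ∈ range n, h (2*n-1-m) := by
    rw [← Finset.sum_range_reflect (fun m => h (n + m)) n]
    apply Finset.sum_congr rfl
    intro m hm
    rw [mem_range] at hm
    rw [show n + (n - 1 - m) = 2*n - 1 - m by omega]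
  have hpair : ∀ m ∈ range n, h m + h (2*n-1-m)
      = (-1:ℂ)^m * ((2*n-1).choose m : ℂ) * (2*I*Complex.sin (((2*n-1-2*m : ℕ):ℂ)*θ)) := by
    intro m hm
    rw [mem_range] at hm
    have c1 : ((2*n-1).choose (2*n-1-m) : ℂ) = ((2*n-1).choose m : ℂ) := by
      rw [Nat.choose_symm (by omega : m ≤ 2*n-1)]
    have c2 : (2*((2*n-1-m : ℕ):ℤ) - (2*n-1)) = -(2*(m:ℤ) - (2*n-1)) := by
      push_cast [Nat.cast_sub (by omega : m ≤ 2*n-1), Nat.cast_sub (by omega : 1 ≤ 2*n)]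
      ring
    have c3 : (-1:ℂ)^(2*n-1-m+1) = (-1:ℂ)^m := neg_one_pow_congrC _ _ (by omega)
    have c4 : (-(2*(m:ℤ) - (2*n-1))) = ((2*n-1-2*m : ℕ):ℤ) := by
      push_cast [Nat.cast_sub (by omega : 2*m ≤ 2*n-1), Nat.cast_sub (by omega : 1 ≤ 2*n)]
      ring
    have key := E_sub_E θ ((2*n-1-2*m : ℕ):ℤ)
    rw [hh]
    simp only
    rw [c1, c2, c3, c4]
    rw [show (-((2*n-1-2*m : ℕ):ℤ)) = 2*(m:ℤ) - (2*n-1) by omega] at key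
    rw [Int.cast_natCast] at key
    linear_combination ((-1:ℂ)^m * ((2*n-1).choose m : ℂ)) * key
  have lhs1 : E θ 1 - E θ (-1) = 2*I*Complex.sin θ := by
    have := E_sub_E θ 1
    rw [this]
    norm_num
  have main := step1 θ n hn
  rw [hsplit, hrefl, ← Finset.sum_add_distrib, Finset.sum_congr rfl hpair, lhs1] at main
  have h2I : (2*I : ℂ) ≠ 0 := by simp [Complex.I_ne_zero]
  apply mul_left_cancel₀ h2I
  calc 2*I*∑ m ∈ range n, (-1:ℂ)^m * ((2*n-1).choose m : ℂ) * Complex.sin (((2*n-1-2*m : ℕ):ℂ)*θ)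
      = ∑ m ∈ range n, (-1:ℂ)^m * ((2*n-1).choose m : ℂ)
          * (2*I*Complex.sin (((2*n-1-2*m : ℕ):ℂ)*θ)) := by
        rw [Finset.mul_sum]
        apply Finset.sum_congr rfl
        intro m _
        ring
    _ = (2*I*Complex.sin θ)^(2*n-1) := main.symm
    _ = 2*I*((-4:ℂ)^(n-1) * Complex.sin θ ^ (2*n-1)) := by
        have e : ((2:ℂ)*I)^(2*n-1) = ((2*I)^2)^(n-1) * (2*I) := by
          rw [← pow_mul, ← pow_succ, show 2*(n-1)+1 = 2*n-1 by omega]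
        have e2 : ((2:ℂ)*I)^2 = -4 := by
          rw [mul_pow, I_sq]; norm_num
        rw [mul_pow, e, e2]
        ring

end ComplexPart


lemma sinIdentR (θ : ℝ) (n : ℕ) (hn : 1 ≤ n) :
    ∑ m ∈ range n, (-1:ℝ)^m * ((2*n-1).choose m : ℝ) * Real.sin (((2*n-1-2*m : ℕ):ℝ)*θ)
      = (-4:ℝ)^(n-1) * Real.sin θ ^ (2*n-1) := by
  have h := sinIdentC θ n hn
  rw [← Complex.ofReal_inj]
  push_cast
  convert h using 2 with m hm

lemma sin_int' (M : ℕ) (hM : M % 2 = 1) :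
    ∫ x in (0:ℝ)..(Real.pi/2), Real.sin ((M:ℝ) * x) = ((M:ℝ))⁻¹ := by
  have hm0 : ((M:ℕ):ℝ) ≠ 0 := by
    simp only [ne_eq, Nat.cast_eq_zero]
    omega
  rw [intervalIntegral.integral_comp_mul_left (fun x => Real.sin x) hm0, integral_sin]
  have hc : Real.cos ((M:ℝ) * (Real.pi/2)) = 0 := by
    have hr : (M:ℝ) = 2*((M/2 : ℕ):ℝ) + 1 := by
      have : M = 2*(M/2)+1 := by omega
      exact_mod_cast this
    rw [hr, show (2*((M/2:ℕ):ℝ)+1)*(Real.pi/2) = (M/2:ℕ)*Real.pi + Real.pi/2 by ring,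
      Real.cos_add_pi_div_two, Real.sin_nat_mul_pi, neg_zero]
  rw [mul_zero, Real.cos_zero, hc, smul_eq_mul]
  norm_num

lemma lemB_range (n : ℕ) (hn : 1 ≤ n) :
    ∑ m ∈ range n, (-1:ℝ)^m * ((2*n-1).choose m : ℝ) / ((2*n-1-2*m:ℕ):ℝ)
      = (-4:ℝ)^(n-1) * (4^(n-1) * (((n-1).factorial:ℝ))^2 / (((2*n-1).factorial:ℝ))) := by
  have hI : (∫ θ in (0:ℝ)..(Real.pi/2),
        ∑ m ∈ range n, (-1:ℝ)^m * ((2*n-1).choose m : ℝ) * Real.sin (((2*n-1-2*m : ℕ):ℝ)*θ))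
      = ∫ θ in (0:ℝ)..(Real.pi/2), (-4:ℝ)^(n-1) * Real.sin θ ^ (2*n-1) := by
    apply intervalIntegral.integral_congr
    intro θ _
    exact sinIdentR θ n hn
  rw [intervalIntegral.integral_finset_sum (fun m _ => by
      apply Continuous.intervalIntegrable; fun_prop)] at hI
  rw [intervalIntegral.integral_const_mul] at hI
  have hW : (∫ θ in (0:ℝ)..(Real.pi/2), Real.sin θ ^ (2*n-1))
      = 4^(n-1) * (((n-1).factorial:ℝ))^2 / (((2*n-1).factorial:ℝ)) := by
    have e : 2*(n-1)+1 = 2*n-1 := by omega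
    rw [← e]
    rw [wallis_odd (n-1), e]
  rw [hW] at hI
  rw [← hI]
  apply Finset.sum_congr rfl
  intro m hm
  rw [mem_range] at hm
  rw [intervalIntegral.integral_const_mul, sin_int' _ (by omega)]
  ring

lemma lemB (n : ℕ) (hn : 1 ≤ n) :
    ∑ i ∈ Icc 1 n, (-1:ℝ)^(i+1) * ((2*n-1).choose (n-i) : ℝ) / ((2*i-1:ℕ):ℝ)
      = 4^(2*n-2) * (((n-1).factorial:ℝ))^2 / ((2*n-1).factorial:ℝ) := by
  rw [sum_Icc_eq_sum_range'
    (fun i => (-1:ℝ)^(i+1) * ((2*n-1).choose (n-i) : ℝ) / ((2*i-1:ℕ):ℝ))]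
  have hterm : ∀ t ∈ range n,
      (-1:ℝ)^((n-t)+1) * ((2*n-1).choose (n-(n-t)) : ℝ) / ((2*(n-t)-1:ℕ):ℝ)
        = (-1:ℝ)^(n-1) * ((-1:ℝ)^t * ((2*n-1).choose t : ℝ) / ((2*n-1-2*t:ℕ):ℝ)) := by
    intro t ht
    rw [mem_range] at ht
    have e1 : n - (n - t) = t := by omega
    have e2 : (2*(n-t)-1:ℕ) = (2*n-1-2*t:ℕ) := by omega
    have e3 : (-1:ℝ)^(n-t+1) = (-1:ℝ)^(n-1) * (-1:ℝ)^t := by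
      rw [← pow_add]
      exact neg_one_pow_congrR _ _ (by omega)
    rw [e1, e2, e3]
    ring
  rw [Finset.sum_congr rfl hterm, ← Finset.mul_sum, lemB_range n hn]
  have e4 : (-1:ℝ)^(n-1) * (-4:ℝ)^(n-1) = 4^(n-1) := by
    rw [← mul_pow]; norm_num
  have e5 : (4:ℝ)^(n-1) * 4^(n-1) = 4^(2*n-2) := by
    rw [← pow_add]; congr 1; omega
  calc (-1:ℝ)^(n-1) * ((-4:ℝ)^(n-1) * (4^(n-1) * (((n-1).factorial:ℝ))^2 / (((2*n-1).factorial:ℝ))))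
      = ((-1:ℝ)^(n-1) * (-4:ℝ)^(n-1)) * 4^(n-1) * (((n-1).factorial:ℝ))^2 / ((2*n-1).factorial:ℝ) := by
        ring
    _ = 4^(2*n-2) * (((n-1).factorial:ℝ))^2 / ((2*n-1).factorial:ℝ) := by rw [e4, e5]



lemma combo_deriv (s : Finset ℕ) (d g μ ν : ℕ → ℝ) (b : ℝ) :
    ∀ k, 1 ≤ k → iteratedDeriv k
      (fun u : ℝ => (∑ i ∈ s, (d i * Real.exp (μ i * u) + g i * Real.exp (ν i * u))) - b * u)
      = fun u => (∑ i ∈ s, (d i * (μ i)^k * Real.exp (μ i * u)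
          + g i * (ν i)^k * Real.exp (ν i * u))) - (if k = 1 then b else 0) := by
  have hterm : ∀ (c e : ℝ) (u : ℝ), HasDerivAt (fun x : ℝ => c * Real.exp (e * x))
      (c * e * Real.exp (e * u)) u := by
    intro c e u
    have h1 : HasDerivAt (fun x : ℝ => e * x) e u := by
      simpa using (hasDerivAt_id u).const_mul e
    simpa [mul_comm, mul_assoc, mul_left_comm] using (h1.exp.const_mul c)
  intro k
  induction k with
  | zero => omega
  | succ k ih =>
    intro _
    rcases Nat.eq_or_lt_of_le (Nat.one_le_iff_ne_zero.mpr (Nat.succ_ne_zero k)) with h1 | h1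
    · -- k + 1 = 1, i.e. k = 0
      have hk0 : k = 0 := by omega
      subst hk0
      rw [iteratedDeriv_one]
      funext u
      have hsum : HasDerivAt (fun x : ℝ => ∑ i ∈ s, (d i * Real.exp (μ i * x) + g i * Real.exp (ν i * x)))
          (∑ i ∈ s, (d i * μ i * Real.exp (μ i * u) + g i * ν i * Real.exp (ν i * u))) u :=
        HasDerivAt.fun_sum (fun i _ => (hterm (d i) (μ i) u).fun_add (hterm (g i) (ν i) u))
      have hb : HasDerivAt (fun x : ℝ => b * x) b u := by
        simpa using (hasDerivAt_id u).const_mul b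
      have := (hsum.fun_sub hb).deriv
      rw [this]
      simp
    · -- k ≥ 1
      have hk : 1 ≤ k := by omega
      rw [iteratedDeriv_succ, ih hk]
      funext u
      have hsum : HasDerivAt (fun x : ℝ => ∑ i ∈ s, (d i * (μ i)^k * Real.exp (μ i * x)
            + g i * (ν i)^k * Real.exp (ν i * x)))
          (∑ i ∈ s, (d i * (μ i)^k * μ i * Real.exp (μ i * u)
            + g i * (ν i)^k * ν i * Real.exp (ν i * u))) u :=
        HasDerivAt.fun_sum (fun i _ =>
          (hterm (d i * (μ i)^k) (μ i) u).fun_add (hterm (g i * (ν i)^k) (ν i) u))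
      have hconst : HasDerivAt (fun _ : ℝ => (if k = 1 then b else 0)) 0 u := hasDerivAt_const _ _
      have := (hsum.fun_sub hconst).deriv
      rw [this]
      simp only [if_neg (by omega : ¬ k + 1 = 1), sub_zero]
      apply Finset.sum_congr rfl
      intro i _
      rw [pow_succ, pow_succ]
      ring

lemma combo_deriv_at_zero (s : Finset ℕ) (d g μ ν : ℕ → ℝ) (b : ℝ) (k : ℕ) (hk : 1 ≤ k) :
    iteratedDeriv k
      (fun u : ℝ => (∑ i ∈ s, (d i * Real.exp (μ i * u) + g i * Real.exp (ν i * u))) - b * u) 0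
      = (∑ i ∈ s, (d i * (μ i)^k + g i * (ν i)^k)) - (if k = 1 then b else 0) := by
  rw [combo_deriv s d g μ ν b k hk]
  simp


/-- `z = 1` is a critical point of order `2n` of `S₀(z) - b log z`: all Euler
derivatives `(z d/dz)^k [S₀(z) - b log z]` for `1 ≤ k ≤ 2n` vanish at `z = 1`.  Writing
`z = e^u`, the Euler derivative `(z d/dz)^k` at `z = 1` is the `k`-th derivative in `u`
at `u = 0`. -/
theorem multicritical_action_critical (n : ℕ) (hn : 1 ≤ n) (k : ℕ) (hk1 : 1 ≤ k)
    (hk2 : k ≤ 2 * n) :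
    iteratedDeriv k (fun u : ℝ => S0 n (Real.exp u) - bConst n * u) 0 = 0 := by
  classical
  set mR : ℕ → ℝ := fun i => ((2*i-1 : ℕ) : ℝ) with hmR
  set c : ℕ → ℝ := fun i => (-1 : ℝ) ^ (i + 1) * ((n - 1).factorial : ℝ) * (n.factorial : ℝ) /
      (mR i * ((n - i).factorial : ℝ) * ((n + i - 1).factorial : ℝ)) with hc
  have hmne : ∀ i ∈ Icc 1 n, mR i ≠ 0 := by
    intro i hi
    rw [mem_Icc] at hi
    simp only [hmR, ne_eq, Nat.cast_eq_zero]
    omega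
  have hfac : ∀ i ∈ Icc 1 n, ((2*n-1).choose (n-i) : ℝ) * ((n-i).factorial : ℝ)
      * ((n+i-1).factorial : ℝ) = ((2*n-1).factorial : ℝ) := by
    intro i hi
    rw [mem_Icc] at hi
    have h := Nat.choose_mul_factorial_mul_factorial (show n-i ≤ 2*n-1 by omega)
    rw [show 2*n-1 - (n-i) = n+i-1 by omega] at h
    exact_mod_cast h
  have hc2 : ∀ i ∈ Icc 1 n, c i = (((n-1).factorial : ℝ) * (n.factorial : ℝ)
      / ((2*n-1).factorial : ℝ)) * ((-1:ℝ)^(i+1) * ((2*n-1).choose (n-i) : ℝ) / mR i) := by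
    intro i hi
    have hm := hmne i hi
    have hf := hfac i hi
    have hC0 : ((2*n-1).choose (n-i) : ℝ) ≠ 0 := by
      rw [mem_Icc] at hi
      simp only [ne_eq, Nat.cast_eq_zero]
      exact (Nat.choose_pos (by omega : n-i ≤ 2*n-1)).ne'
    have hy : ((2*n-1).factorial : ℝ) ≠ 0 := Nat.cast_ne_zero.mpr (Nat.factorial_ne_zero _)
    have hf1 : ((n-i).factorial : ℝ) ≠ 0 := Nat.cast_ne_zero.mpr (Nat.factorial_ne_zero _)
    have hf2 : ((n+i-1).factorial : ℝ) ≠ 0 := Nat.cast_ne_zero.mpr (Nat.factorial_ne_zero _)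
    simp only [hc]
    rw [div_mul_div_comm, div_eq_div_iff (mul_ne_zero (mul_ne_zero hm hf1) hf2) (mul_ne_zero hy hm)]
    linear_combination (-(-1:ℝ)^(i+1) * ((n-1).factorial : ℝ) * (n.factorial : ℝ) * mR i) * hf
  have hF : (fun u : ℝ => S0 n (Real.exp u) - bConst n * u)
      = fun u => (∑ i ∈ Icc 1 n, ((c i / mR i) * Real.exp (mR i * u)
          + (-(c i) / mR i) * Real.exp (-(mR i) * u))) - bConst n * u := by
    funext u
    rw [S0]
    congr 1
    apply Finset.sum_congr rfl
    intro i hi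
    have e1 : Real.exp u ^ (2*i-1) = Real.exp (mR i * u) := by
      rw [← Real.exp_nat_mul]
    have e2 : (Real.exp u)⁻¹ ^ (2*i-1) = Real.exp (-(mR i) * u) := by
      rw [← Real.exp_neg, ← Real.exp_nat_mul]
      congr 1
      ring
    rw [e1, e2, hc]
    simp only [hmR]
    ring
  rw [hF, combo_deriv_at_zero (Icc 1 n) (fun i => c i / mR i) (fun i => -(c i)/mR i) mR
    (fun i => -(mR i)) (bConst n) k hk1]
  rcases Nat.even_or_odd k with hev | hodd
  · have hk1' : k ≠ 1 := by
      rw [Nat.even_iff] at hev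
      omega
    rw [if_neg hk1', sub_zero]
    apply Finset.sum_eq_zero
    intro i hi
    rw [hev.neg_pow]
    ring
  · obtain ⟨j, hj⟩ := hodd
    have hoddk : Odd k := ⟨j, hj⟩
    have hnegpow : ∀ i, (-(mR i))^k = -((mR i)^k) := fun i => hoddk.neg_pow _
    have hK0 : (((n-1).factorial : ℝ) * (n.factorial : ℝ) / ((2*n-1).factorial : ℝ)) ≠ 0 := by
      have h1 : ((n-1).factorial : ℝ) ≠ 0 := Nat.cast_ne_zero.mpr (Nat.factorial_ne_zero _)
      have h2 : (n.factorial : ℝ) ≠ 0 := Nat.cast_ne_zero.mpr (Nat.factorial_ne_zero _)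
      have h3 : ((2*n-1).factorial : ℝ) ≠ 0 := Nat.cast_ne_zero.mpr (Nat.factorial_ne_zero _)
      positivity
    rcases Nat.eq_zero_or_pos j with hj0 | hjpos
    · -- k = 1
      subst hj0
      simp only [Nat.mul_zero, Nat.zero_add] at hj
      subst hj
      rw [if_pos rfl, sub_eq_zero]
      have hterm : ∀ i ∈ Icc 1 n, c i / mR i * mR i ^ 1 + (-(c i)/mR i) * (-(mR i))^1
          = 2 * ((((n-1).factorial : ℝ) * (n.factorial : ℝ) / ((2*n-1).factorial : ℝ)))
            * ((-1:ℝ)^(i+1) * ((2*n-1).choose (n-i) : ℝ) / mR i) := by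
        intro i hi
        rw [pow_one, pow_one, hc2 i hi]
        field_simp [hmne i hi]
        ring
      rw [Finset.sum_congr rfl hterm, ← Finset.mul_sum]
      have hsum : ∑ i ∈ Icc 1 n, (-1:ℝ)^(i+1) * ((2*n-1).choose (n-i) : ℝ) / mR i
          = 4^(2*n-2) * (((n-1).factorial:ℝ))^2 / ((2*n-1).factorial:ℝ) := lemB n hn
      rw [hsum, bConst]
      -- final algebra
      have hx : ((n-1).factorial : ℝ) ≠ 0 := Nat.cast_ne_zero.mpr (Nat.factorial_ne_zero _)
      have hy : ((2*n-1).factorial : ℝ) ≠ 0 := Nat.cast_ne_zero.mpr (Nat.factorial_ne_zero _)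
      have hn0 : (n : ℝ) ≠ 0 := Nat.cast_ne_zero.mpr (by omega)
      have hnf : (n.factorial : ℝ) = n * ((n-1).factorial : ℝ) := by
        have h' : n.factorial = n * (n-1).factorial := by
          conv_lhs => rw [show n = (n-1)+1 by omega]
          rw [Nat.factorial_succ]
          congr 1
          omega
        rw [h']
        push_cast
        ring
      have h2nf : ((2*n).factorial : ℝ) = (2*n) * ((2*n-1).factorial : ℝ) := by
        have h' : (2*n).factorial = (2*n) * (2*n-1).factorial := by
          conv_lhs => rw [show 2*n = (2*n-1)+1 by omega]
          rw [Nat.factorial_succ]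
          congr 1
          omega
        rw [h']
        push_cast
        ring
      have hC : ((2*n).choose n : ℝ) * (n.factorial : ℝ) * (n.factorial : ℝ)
          = ((2*n).factorial : ℝ) := by
        have h := Nat.choose_mul_factorial_mul_factorial (show n ≤ 2*n by omega)
        rw [show 2*n - n = n by omega] at h
        exact_mod_cast h
      have hCval : ((2*n).choose n : ℝ) = 2*(n:ℝ) * ((2*n-1).factorial : ℝ)
          / ((n.factorial : ℝ) * (n.factorial : ℝ)) := by
        rw [eq_div_iff (by positivity), ← mul_assoc, hC, h2nf]
      rw [hCval, hnf]
      have h4 : (4:ℝ)^(2*n-2) = 2^(4*n-4) := by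
        rw [show (4:ℝ) = 2^2 by norm_num, ← pow_mul]
        congr 1
        omega
      have h8 : (2:ℝ)^(4*n-1) = 2^(4*n-4) * 8 := by
        rw [show (8:ℝ) = 2^3 by norm_num, ← pow_add]
        congr 1
        omega
      rw [h4, h8]
      field_simp
      ring
    · -- k = 2j+1 ≥ 3
      have hkne : k ≠ 1 := by omega
      rw [if_neg hkne, sub_zero]
      have hterm : ∀ i ∈ Icc 1 n, c i / mR i * mR i ^ k + (-(c i)/mR i) * (-(mR i))^k
          = (2 * (((n-1).factorial : ℝ) * (n.factorial : ℝ) / ((2*n-1).factorial : ℝ)))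
            * ((-1:ℝ)^(i+1) * ((2*n-1).choose (n-i) : ℝ) * (mR i)^(2*j-1)) := by
        intro i hi
        rw [hnegpow i, hc2 i hi]
        have hm := hmne i hi
        have hpow : (mR i)^k = (mR i)^(2*j-1) * (mR i)^2 := by
          rw [← pow_add]
          congr 1
          omega
        rw [hpow]
        field_simp
        ring
      rw [Finset.sum_congr rfl hterm, ← Finset.mul_sum]
      rw [lemA n j hjpos (by omega) hn, mul_zero]
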